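/- A k-regular graph of girth g ≥ 2r with k ≥ 2 has at least 2·∑_{i=0}^{r−1}(k−1)^i vertices. -/

import Mathlib

open SimpleGraph

namespace MooreBoundAux

variable {V : Type*} {G : SimpleGraph V}

private lemma aux_dist_adj {a b : V} (h : G.Adj a b) : G.dist a b = 1 := by
  refine le_antisymm ?_ (h.reachable.pos_dist_of_ne h.ne)
  simpa [SimpleGraph.Adj.toWalk] using SimpleGraph.dist_le h.toWalk

private lemma aux_dist_triangle {a b c : V} (h1 : G.Reachable a b) (h2 : G.Reachable b c) :
    G.dist a c ≤ G.dist a b + G.dist b c := by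
  obtain ⟨p, hp⟩ := h1.exists_walk_length_eq_dist
  obtain ⟨q, hq⟩ := h2.exists_walk_length_eq_dist
  have := SimpleGraph.dist_le (p.append q)
  rwa [Walk.length_append, hp, hq] at this

private lemma aux_dist_add [DecidableEq V] {a b z : V} (P : G.Walk a b) (hz : z ∈ P.support) :
    G.dist a z + G.dist z b ≤ P.length := by
  have hsplit := congrArg Walk.length (P.take_spec hz)
  rw [Walk.length_append] at hsplit
  have h1 := SimpleGraph.dist_le (P.takeUntil z hz)
  have h2 := SimpleGraph.dist_le (P.dropUntil z hz)
  omega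

private lemma aux_exists_path [DecidableEq V] {a b : V} (h : G.Reachable a b) :
    ∃ p : G.Walk a b, p.IsPath ∧ p.length = G.dist a b := by
  obtain ⟨p, hp⟩ := h.exists_walk_length_eq_dist
  refine ⟨p.bypass, Walk.bypass_isPath p, le_antisymm ?_ (SimpleGraph.dist_le _)⟩
  calc p.bypass.length ≤ p.length := Walk.length_bypass_le p
    _ = G.dist a b := hp

private lemma exists_prefix_meet {c b : V} (w : G.Walk c b) (S : Set V) (hb : b ∈ S) :
    ∃ (e : V) (_ : e ∈ S) (w1 : G.Walk c e),
      w1.support <+: w.support ∧ ∀ x ∈ w1.support, x ∈ S → x = e := by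
  classical
  revert hb
  induction w with
  | nil =>
    intro hb
    exact ⟨_, hb, Walk.nil, by simp, by intro x hx _; simpa [Walk.support_nil] using hx⟩
  | @cons c d b' h w' ih =>
    intro hb
    by_cases hc : c ∈ S
    · exact ⟨_, hc, Walk.nil, ⟨w'.support, by simp [Walk.support_cons, Walk.support_nil]⟩,
        by intro x hx _; simpa [Walk.support_nil] using hx⟩
    · obtain ⟨e, he, w1, hpre, hmeet⟩ := ih hb
      obtain ⟨t, ht⟩ := hpre
      refine ⟨e, he, Walk.cons h w1, ⟨t, by simp [Walk.support_cons, ht]⟩, ?_⟩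
      intro x hx hxS
      rw [Walk.support_cons, List.mem_cons] at hx
      rcases hx with rfl | hx
      · exact absurd hxS hc
      · exact hmeet x hx hxS

private lemma walk_eq_of_short [DecidableEq V] {n : ℕ}
    (hcyc : ∀ ⦃c : V⦄ (w : G.Walk c c), w.IsCycle → n < w.length) :
    ∀ {a b : V} (p q : G.Walk a b), p.IsPath → q.IsPath → p.length + q.length ≤ n → p = q := by
  intro a b p
  induction p with
  | nil =>
    intro q _ hq _
    exact ((Walk.isPath_iff_eq_nil).mp hq).symm
  | @cons a c b h p' ih =>
    intro q hp hq hlen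
    cases q with
    | nil => exact (Walk.isPath_iff_eq_nil).mp hp
    | @cons _ d _ h' q' =>
      by_cases hcd : c = d
      · subst hcd
        have hpq : p' = q' := by
          refine ih q' hp.of_cons hq.of_cons ?_
          simp only [Walk.length_cons] at hlen
          omega
        rw [hpq]
      · exfalso
        have hap' : a ∉ p'.support := ((Walk.cons_isPath_iff h p').mp hp).2
        have haq' : a ∉ q'.support := ((Walk.cons_isPath_iff h' q').mp hq).2
        obtain ⟨e, he, P1, hpre, hmeet⟩ :=
          exists_prefix_meet p' {x | x ∈ (Walk.cons h' q').support} (Walk.end_mem_support _)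
        have heS : e ∈ (Walk.cons h' q').support := he
        have hP1sub : P1.support ⊆ p'.support := hpre.subset
        have hP1nodup : P1.support.Nodup := (hp.of_cons.support_nodup).sublist hpre.sublist
        have hP1path : P1.IsPath := (Walk.isPath_def _).mpr hP1nodup
        have haP1 : a ∉ P1.support := fun hx => hap' (hP1sub hx)
        set Q1 := (Walk.cons h' q').takeUntil e heS with hQ1def
        have hQ1path : Q1.IsPath := hq.takeUntil heS
        have hdisj : ∀ x ∈ P1.support, x ∈ Q1.support → x = e := fun x hx hxQ =>
          hmeet x hx (Walk.support_takeUntil_subset _ heS hxQ)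
        have hQr : Q1.reverse.IsPath := hQ1path.reverse
        have hQnd : Q1.reverse.support.Nodup := hQr.support_nodup
        have hQrsup := Walk.support_eq_cons Q1.reverse
        have hent : e ∉ Q1.reverse.support.tail := by
          rw [hQrsup] at hQnd
          exact (List.nodup_cons.mp hQnd).1
        have happ : (P1.append Q1.reverse).IsPath := by
          rw [Walk.isPath_def, Walk.support_append]
          refine List.Nodup.append hP1nodup (hQnd.sublist (List.tail_sublist _)) ?_
          intro x hxP hxT
          have hx1 : x ∈ Q1.reverse.support := List.mem_of_mem_tail hxT
          have hx2 : x ∈ Q1.support := by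
            rwa [Walk.support_reverse, List.mem_reverse] at hx1
          have hxe : x = e := hdisj x hxP hx2
          subst hxe
          exact hent hxT
        have hedge : s(a, c) ∉ (P1.append Q1.reverse).edges := by
          intro hmem
          rw [Walk.edges_append, List.mem_append] at hmem
          rcases hmem with hm | hm
          · exact haP1 (Walk.fst_mem_support_of_mem_edges _ hm)
          · rw [Walk.edges_reverse, List.mem_reverse] at hm
            have hm' : s(a, c) ∈ (Walk.cons h' q').edges :=
              Walk.edges_takeUntil_subset _ heS hm
            rw [Walk.edges_cons, List.mem_cons] at hm'
            rcases hm' with hm' | hm'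
            · rw [Sym2.eq_iff] at hm'
              rcases hm' with ⟨-, hm'⟩ | ⟨hm1, hm2⟩
              · exact hcd hm'
              · exact h'.ne hm1
            · exact haq' (Walk.fst_mem_support_of_mem_edges _ hm')
        have hcycle : (Walk.cons h (P1.append Q1.reverse)).IsCycle :=
          SimpleGraph.Path.cons_isCycle ⟨P1.append Q1.reverse, happ⟩ h hedge
        have hP1le : P1.length ≤ p'.length := by
          have := hpre.length_le
          rw [Walk.length_support, Walk.length_support] at this
          omega
        have hQ1le : Q1.length ≤ q'.length + 1 := by
          have := Walk.length_takeUntil_le _ heS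
          simpa [Walk.length_cons] using this
        have hlen' : (Walk.cons h (P1.append Q1.reverse)).length ≤ n := by
          simp only [Walk.length_cons, Walk.length_append, Walk.length_reverse] at *
          omega
        exact absurd (hcyc _ hcycle) (Nat.not_lt.mpr hlen')

private lemma moore_side [Fintype V] [DecidableEq V] [DecidableRel G.Adj] {k r : ℕ}
    (hreg : ∀ x : V, G.degree x = k)
    (hcyc : ∀ ⦃c : V⦄ (w : G.Walk c c), w.IsCycle → 2 * r - 1 < w.length)
    {u v : V} (huv : G.Adj u v) :
    ∀ i : ℕ, i + 1 ≤ r →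
      (k - 1) ^ i ≤ (Finset.univ.filter fun w => G.dist u w = i ∧ G.dist v w = i + 1).card := by
  have hd1 : G.dist u v = 1 := aux_dist_adj huv
  have hd1' : G.dist v u = 1 := by rw [SimpleGraph.dist_comm]; exact hd1
  intro i
  induction i with
  | zero =>
    intro _
    rw [pow_zero]
    refine Finset.card_pos.mpr ⟨u, ?_⟩
    simp [SimpleGraph.dist_self, hd1', huv.symm]
  | succ i ih =>
    intro hir
    have IH := ih (by omega)
    set A := (Finset.univ.filter fun w => G.dist u w = i ∧ G.dist v w = i + 1) with hA
    set A' := (Finset.univ.filter fun w => G.dist u w = (i+1) ∧ G.dist v w = (i+1) + 1) with hA'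
    -- forward expansion
    have hs : ∀ w ∈ A, k - 1 ≤ (A'.filter (G.Adj w)).card := by
      intro w hw
      rw [hA, Finset.mem_filter] at hw
      obtain ⟨-, hduw, hdvw⟩ := hw
      have hrvw : G.Reachable v w := Reachable.of_dist_ne_zero (by omega)
      have hruw : G.Reachable u w := huv.reachable.trans hrvw
      have hset : A'.filter (G.Adj w) =
          (G.neighborFinset w).filter (fun x => G.dist u x = i + 1 ∧ G.dist v x = i + 2) := by
        ext x
        simp only [hA', Finset.mem_filter, Finset.mem_univ, true_and,
          SimpleGraph.mem_neighborFinset]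
        tauto
      rw [hset]
      have hcards := Finset.card_filter_add_card_filter_not
        (s := G.neighborFinset w) (p := fun x => G.dist u x = i + 1 ∧ G.dist v x = i + 2)
      have hkcard : (G.neighborFinset w).card = k := by
        rw [G.card_neighborFinset_eq_degree]; exact hreg w
      -- pairwise argument for "non-forward" neighbours
      have pair : ∀ x y : V, G.Adj w x → G.Adj w y →
          G.dist u x ≤ i → G.dist u y ≤ i → x = y := by
        intro x y hwx hwy hx hy
        have hrx : G.Reachable u x := hruw.trans hwx.reachable
        have hry : G.Reachable u y := hruw.trans hwy.reachable
        obtain ⟨Px, hPx, hPxlen⟩ := aux_exists_path hrx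
        obtain ⟨Py, hPy, hPylen⟩ := aux_exists_path hry
        have hwPx : w ∉ Px.support := by
          intro hmem
          have h1 := aux_dist_add Px hmem
          have h2 : 1 ≤ G.dist w x := hwx.reachable.pos_dist_of_ne hwx.ne
          rw [hPxlen] at h1
          omega
        have hwPy : w ∉ Py.support := by
          intro hmem
          have h1 := aux_dist_add Py hmem
          have h2 : 1 ≤ G.dist w y := hwy.reachable.pos_dist_of_ne hwy.ne
          rw [hPylen] at h1
          omega
        have hR1 : (Walk.cons hwx Px.reverse).IsPath := by
          rw [Walk.cons_isPath_iff]
          exact ⟨hPx.reverse, by rwa [Walk.support_reverse, List.mem_reverse]⟩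
        have hR2 : (Walk.cons hwy Py.reverse).IsPath := by
          rw [Walk.cons_isPath_iff]
          exact ⟨hPy.reverse, by rwa [Walk.support_reverse, List.mem_reverse]⟩
        have heq := walk_eq_of_short hcyc (Walk.cons hwx Px.reverse) (Walk.cons hwy Py.reverse)
          hR1 hR2 (by
            simp only [Walk.length_cons, Walk.length_reverse, hPxlen, hPylen]
            omega)
        have hsup : Px.reverse.support = Py.reverse.support := by
          have := congrArg Walk.support heq
          simpa [Walk.support_cons] using this
        have := congrArg List.head? hsup
        rw [Walk.support_eq_cons Px.reverse, Walk.support_eq_cons Py.reverse] at this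
        simpa using this
      -- classification of bad neighbours
      have key : ∀ z : V, G.Adj w z → ¬(G.dist u z = i + 1 ∧ G.dist v z = i + 2) →
          G.dist u z ≤ i ∨ (i = 0 ∧ z = v) := by
        intro z hz hbadz
        by_cases hduz : G.dist u z ≤ i
        · exact Or.inl hduz
        have hwz1 : G.dist w z ≤ 1 := by
          rw [aux_dist_adj hz]
        have hdu1 : G.dist u z = i + 1 := by
          have := aux_dist_triangle hruw hz.reachable
          omega
        have hrz : G.Reachable u z := Reachable.of_dist_ne_zero (by omega)
        have hrvz : G.Reachable v z := huv.symm.reachable.trans hrz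
        have hdvz_le : G.dist v z ≤ i + 2 := by
          have := aux_dist_triangle hrvw hz.reachable
          omega
        have hdvz_ge : i ≤ G.dist v z := by
          have := aux_dist_triangle huv.reachable hrvz
          omega
        have hdvz_ne : G.dist v z ≠ i + 2 := fun hc => hbadz ⟨hdu1, hc⟩
        have hcase1 : G.dist v z ≠ i + 1 := by
          intro hdvz
          obtain ⟨P1, hP1, hP1len⟩ := aux_exists_path hrz
          obtain ⟨P2, hP2, hP2len⟩ := aux_exists_path hrvz
          have huP2 : u ∉ P2.support := by
            intro hu
            have := aux_dist_add P2 hu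
            rw [hP2len, hdvz] at this
            omega
          have heq := walk_eq_of_short hcyc P1 (Walk.cons huv P2) hP1
            ((Walk.cons_isPath_iff _ _).mpr ⟨hP2, huP2⟩) (by
              simp only [Walk.length_cons, hP1len, hP2len, hdu1, hdvz]
              omega)
          have := congrArg Walk.length heq
          rw [hP1len, Walk.length_cons, hP2len, hdu1, hdvz] at this
          omega
        have hdvz : G.dist v z = i := by omega
        by_cases hi : i = 0
        · refine Or.inr ⟨hi, ?_⟩
          have : G.dist v z = 0 := by omega
          exact ((hrvz.dist_eq_zero_iff).mp this).symm
        · exfalso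
          have hzv : z ≠ v := by
            intro hzeq
            subst hzeq
            rw [SimpleGraph.dist_self] at hdvz
            omega
          obtain ⟨Pw, hPw, hPwlen⟩ := aux_exists_path hruw
          obtain ⟨Q, hQ, hQlen⟩ := aux_exists_path hrvz
          have hzPw : z ∉ Pw.support := by
            intro hmem
            have := aux_dist_add Pw hmem
            rw [hPwlen] at this
            omega
          have huQ : u ∉ Q.support := by
            intro hmem
            have := aux_dist_add Q hmem
            rw [hQlen] at this
            omega
          have hW1 : (Walk.cons hz.symm Pw.reverse).IsPath := by
            rw [Walk.cons_isPath_iff]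
            exact ⟨hPw.reverse, by rwa [Walk.support_reverse, List.mem_reverse]⟩
          have hW2path : (Q.reverse.append (Walk.cons huv.symm Walk.nil)).IsPath := by
            rw [Walk.isPath_def, Walk.support_append]
            simp only [Walk.support_cons, Walk.support_nil, List.tail_cons]
            refine List.Nodup.append hQ.reverse.support_nodup (List.nodup_singleton u) ?_
            intro x hx1 hx2
            rw [List.mem_singleton] at hx2
            subst hx2
            rw [Walk.support_reverse, List.mem_reverse] at hx1
            exact huQ hx1
          have heq := walk_eq_of_short hcyc (Walk.cons hz.symm Pw.reverse)
            (Q.reverse.append (Walk.cons huv.symm Walk.nil)) hW1 hW2path (by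
              simp only [Walk.length_cons, Walk.length_reverse, Walk.length_append,
                Walk.length_nil, hPwlen, hQlen, hduw, hdvz]
              omega)
          have hv2 : v ∈ (Q.reverse.append (Walk.cons huv.symm Walk.nil)).support := by
            apply Walk.subset_support_append_left
            exact Walk.end_mem_support Q.reverse
          rw [← heq, Walk.support_cons, List.mem_cons] at hv2
          rcases hv2 with hv2 | hv2
          · exact hzv hv2.symm
          · rw [Walk.support_reverse, List.mem_reverse] at hv2
            have := aux_dist_add Pw hv2
            rw [hPwlen, hd1, hdvw] at this
            omega
      have hbadcard :
          ((G.neighborFinset w).filter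
            (fun x => ¬(G.dist u x = i + 1 ∧ G.dist v x = i + 2))).card ≤ 1 := by
        rw [Finset.card_le_one]
        intro x hx y hy
        rw [Finset.mem_filter, SimpleGraph.mem_neighborFinset] at hx hy
        rcases key x hx.1 hx.2 with hxa | ⟨hi0, hxv⟩
        · rcases key y hy.1 hy.2 with hya | ⟨hi0, hyv⟩
          · exact pair x y hx.1 hy.1 hxa hya
          · exfalso
            subst hi0
            have hwu : w = u := ((hruw.dist_eq_zero_iff).mp (by omega)).symm
            subst hwu
            have hrx : G.Reachable w x := hx.1.reachable
            have : G.dist w x = 0 := by omega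
            exact hx.1.ne ((hrx.dist_eq_zero_iff).mp this)
        · rcases key y hy.1 hy.2 with hya | ⟨hi0', hyv⟩
          · exfalso
            subst hi0
            have hwu : w = u := ((hruw.dist_eq_zero_iff).mp (by omega)).symm
            subst hwu
            have hry : G.Reachable w y := hy.1.reachable
            have : G.dist w y = 0 := by omega
            exact hy.1.ne ((hry.dist_eq_zero_iff).mp this)
          · rw [hxv, hyv]
      omega
    -- backward uniqueness
    have ht : ∀ x ∈ A', (A.filter (fun w => G.Adj w x)).card ≤ 1 := by
      intro x hx
      rw [hA', Finset.mem_filter] at hx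
      obtain ⟨-, hdux, hdvx⟩ := hx
      rw [Finset.card_le_one]
      intro w1 hw1 w2 hw2
      simp only [hA, Finset.mem_filter, Finset.mem_univ, true_and] at hw1 hw2
      obtain ⟨⟨hd1w, hd2w⟩, hadj1⟩ := hw1
      obtain ⟨⟨hd1w', hd2w'⟩, hadj2⟩ := hw2
      have hr1 : G.Reachable u w1 := huv.reachable.trans (Reachable.of_dist_ne_zero (by omega))
      have hr2 : G.Reachable u w2 := huv.reachable.trans (Reachable.of_dist_ne_zero (by omega))
      obtain ⟨P1, hP1, hP1len⟩ := aux_exists_path hr1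
      obtain ⟨P2, hP2, hP2len⟩ := aux_exists_path hr2
      have hxP1 : x ∉ P1.support := by
        intro hmem
        have := aux_dist_add P1 hmem
        rw [hP1len, hd1w] at this
        omega
      have hxP2 : x ∉ P2.support := by
        intro hmem
        have := aux_dist_add P2 hmem
        rw [hP2len, hd1w'] at this
        omega
      have hR1 : (Walk.cons hadj1.symm P1.reverse).IsPath := by
        rw [Walk.cons_isPath_iff]
        exact ⟨hP1.reverse, by rwa [Walk.support_reverse, List.mem_reverse]⟩
      have hR2 : (Walk.cons hadj2.symm P2.reverse).IsPath := by
        rw [Walk.cons_isPath_iff]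
        exact ⟨hP2.reverse, by rwa [Walk.support_reverse, List.mem_reverse]⟩
      have heq := walk_eq_of_short hcyc (Walk.cons hadj1.symm P1.reverse)
        (Walk.cons hadj2.symm P2.reverse) hR1 hR2 (by
          simp only [Walk.length_cons, Walk.length_reverse, hP1len, hP2len, hd1w, hd1w']
          omega)
      have hsup : P1.reverse.support = P2.reverse.support := by
        have := congrArg Walk.support heq
        simpa [Walk.support_cons] using this
      have := congrArg List.head? hsup
      rw [Walk.support_eq_cons P1.reverse, Walk.support_eq_cons P2.reverse] at this
      simpa using this
    -- double counting
    have hs' : ∀ w ∈ A, k - 1 ≤ (A'.bipartiteAbove (fun a b => G.Adj a b) w).card := by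
      intro w hw
      simpa [Finset.bipartiteAbove] using hs w hw
    have ht' : ∀ x ∈ A', (A.bipartiteBelow (fun a b => G.Adj a b) x).card ≤ 1 := by
      intro x hx
      simpa [Finset.bipartiteBelow] using ht x hx
    have hcount := Finset.card_mul_le_card_mul (fun a b => G.Adj a b) hs' ht'
    calc (k - 1) ^ (i + 1) = (k - 1) ^ i * (k - 1) := by rw [pow_succ]
      _ ≤ A.card * (k - 1) := Nat.mul_le_mul_right _ IH
      _ ≤ A'.card * 1 := hcount
      _ = A'.card := by rw [mul_one]

end MooreBoundAux

/-- Even-girth Moore bound: a `k`-regular graph (`k ≥ 2`) of girth at least `2r`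
(`r ≥ 1`) has at least `2·∑_{i=0}^{r-1} (k-1)^i` vertices. -/
theorem moore_bound_even_girth {V : Type*} [Fintype V] [Nonempty V] (G : SimpleGraph V)
    [DecidableRel G.Adj] (k r : ℕ) (hk : 2 ≤ k) (hr : 1 ≤ r)
    (hreg : ∀ v : V, G.degree v = k) (hg : ((2 * r : ℕ) : ℕ∞) ≤ G.girth) :
    2 * ∑ i ∈ Finset.range r, (k - 1) ^ i ≤ Fintype.card V := by
  classical
  have hgn : 2 * r ≤ G.girth := by exact_mod_cast hg
  have hcyc : ∀ ⦃c : V⦄ (w : G.Walk c c), w.IsCycle → 2 * r - 1 < w.length := by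
    intro c w hw
    have h1 : G.egirth ≤ w.length := le_egirth.mp le_rfl c w hw
    have h2 : G.girth ≤ w.length := by
      have := ENat.toNat_le_toNat h1 (by simp)
      simpa [SimpleGraph.girth] using this
    omega
  -- find an edge
  obtain ⟨u⟩ := ‹Nonempty V›
  have hdeg : 0 < (G.neighborFinset u).card := by
    rw [G.card_neighborFinset_eq_degree, hreg]
    omega
  obtain ⟨v, hv⟩ := Finset.card_pos.mp hdeg
  have huv : G.Adj u v := (SimpleGraph.mem_neighborFinset _ _ _).mp hv
  set A : ℕ → Finset V :=
    fun i => Finset.univ.filter fun w => G.dist u w = i ∧ G.dist v w = i + 1 with hAdef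
  set B : ℕ → Finset V :=
    fun i => Finset.univ.filter fun w => G.dist v w = i ∧ G.dist u w = i + 1 with hBdef
  have hA : ∀ i, i < r → (k - 1) ^ i ≤ (A i).card := fun i hi =>
    MooreBoundAux.moore_side hreg hcyc huv i (by omega)
  have hB : ∀ i, i < r → (k - 1) ^ i ≤ (B i).card := fun i hi =>
    MooreBoundAux.moore_side hreg hcyc huv.symm i (by omega)
  have hABdisj : ∀ i, Disjoint (A i) (B i) := by
    intro i
    rw [Finset.disjoint_left]
    intro x hx hx'
    simp only [hAdef, hBdef, Finset.mem_filter, Finset.mem_univ, true_and] at hx hx'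
    omega
  have hdisj : ∀ i ∈ Finset.range r, ∀ j ∈ Finset.range r, i ≠ j →
      Disjoint (A i ∪ B i) (A j ∪ B j) := by
    intro i _ j _ hij
    rw [Finset.disjoint_left]
    intro x hx hx'
    simp only [hAdef, hBdef, Finset.mem_union, Finset.mem_filter, Finset.mem_univ,
      true_and] at hx hx'
    omega
  calc 2 * ∑ i ∈ Finset.range r, (k - 1) ^ i
      = ∑ i ∈ Finset.range r, ((k - 1) ^ i + (k - 1) ^ i) := by
        rw [two_mul, ← Finset.sum_add_distrib]
    _ ≤ ∑ i ∈ Finset.range r, ((A i).card + (B i).card) := by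
        refine Finset.sum_le_sum fun i hi => ?_
        have hi' := Finset.mem_range.mp hi
        exact Nat.add_le_add (hA i hi') (hB i hi')
    _ = ∑ i ∈ Finset.range r, ((A i) ∪ (B i)).card := by
        refine Finset.sum_congr rfl fun i _ => ?_
        rw [Finset.card_union_of_disjoint (hABdisj i)]
    _ = ((Finset.range r).biUnion fun i => (A i) ∪ (B i)).card :=
        (Finset.card_biUnion hdisj).symm
    _ ≤ Fintype.card V := by
        simpa using Finset.card_le_univ _
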